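/- Let κ be a regular uncountable cardinal. Then κ has the normal* filter property if and only if κ is ineffable. -/

import Mathlib

open Set Cardinal

/-- `c` is a club in the well-ordered type `α` (thought of as the cardinal `κ = #α`):
it is closed (contains the supremum of each of its nonempty bounded subsets) and unbounded. -/
def IsClubIn {α : Type*} [LinearOrder α] (c : Set α) : Prop :=
  (∀ s ⊆ c, s.Nonempty → ∀ a : α, IsLUB s a → a ∈ c) ∧ ∀ a : α, ∃ b ∈ c, a < b

/-- `x` is stationary: it meets every club. -/
def IsStatIn {α : Type*} [LinearOrder α] (x : Set α) : Prop :=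
  ∀ c : Set α, IsClubIn c → (x ∩ c).Nonempty

/-- `F` is a uniform filter on `κ`: a filter all of whose members have cardinality `κ`,
containing all co-bounded sets. -/
def IsUniformFilter {α : Type*} [LinearOrder α] (F : Set (Set α)) : Prop :=
  Set.univ ∈ F ∧ (∀ x ∈ F, ∀ y : Set α, x ⊆ y → y ∈ F) ∧
    (∀ x ∈ F, ∀ y ∈ F, x ∩ y ∈ F) ∧ (∀ x ∈ F, #x = #α) ∧
    ∀ x : Set α, BddAbove xᶜ → x ∈ F

/-- `F` is normal*: the diagonal intersection of every `κ`-sequence of members of `F` is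
stationary. -/
def IsNormalStar {α : Type*} [LinearOrder α] (F : Set (Set α)) : Prop :=
  ∀ f : α → Set α, (∀ i, f i ∈ F) → IsStatIn {k : α | ∀ i < k, k ∈ f i}

/-- `F` measures `X`: for every `x ∈ X` either `x ∈ F` or `κ \ x ∈ F`. -/
def Measures {α : Type*} (F X : Set (Set α)) : Prop :=
  ∀ x ∈ X, x ∈ F ∨ xᶜ ∈ F

/-- `κ` has the normal* filter property: every `X ⊆ P(κ)` of size at most `κ` is measured
by some normal* uniform filter. -/
def NormalStarFilterProperty (α : Type*) [LinearOrder α] : Prop :=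
  ∀ X : Set (Set α), #X ≤ #α →
    ∃ F : Set (Set α), IsUniformFilter F ∧ IsNormalStar F ∧ Measures F X

/-- `κ` is ineffable: for every partition `f` of the two-element subsets `{i, j}` (`i < j`)
of `κ` into two pieces there is a stationary homogeneous set. -/
def Ineffable (α : Type*) [LinearOrder α] : Prop :=
  ∀ f : α → α → Bool, ∃ x : Set α, IsStatIn x ∧
    ∃ c : Bool, ∀ i ∈ x, ∀ j ∈ x, i < j → f i j = c

section Basics

variable {α : Type*} [LinearOrder α] [WellFoundedLT α]

theorem exists_isLUB_aux (s : Set α) (hne : s.Nonempty) (hbd : BddAbove s) :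
    ∃ a, IsLUB s a := by
  have wf : WellFounded ((· < ·) : α → α → Prop) := IsWellFounded.wf
  refine ⟨wf.min (upperBounds s) hbd, wf.min_mem _ hbd, ?_⟩
  intro b hb
  by_contra hlt
  exact wf.not_lt_min (upperBounds s) hb (not_le.mp hlt)

theorem isClubIn_Ioi (hgt : ∀ a : α, ∃ b, a < b) (a : α) : IsClubIn (Set.Ioi a) := by
  constructor
  · rintro s hs ⟨e, he⟩ b hb
    exact lt_of_lt_of_le (hs he) (hb.1 he)
  · intro b
    obtain ⟨c, hc⟩ := hgt (max a b)
    exact ⟨c, lt_of_le_of_lt (le_max_left _ _) hc, lt_of_le_of_lt (le_max_right _ _) hc⟩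

theorem IsStatIn.not_bddAbove (hgt : ∀ a : α, ∃ b, a < b) {x : Set α} (hx : IsStatIn x) :
    ¬ BddAbove x := by
  rintro ⟨b, hb⟩
  obtain ⟨e, hex, heb⟩ := hx (Set.Ioi b) (isClubIn_Ioi hgt b)
  exact absurd (hb hex) (not_le.mpr heb)

theorem upperBounds_subseq {u : ℕ → α} (hm : Monotone u) {φ : ℕ → ℕ} (hφ : ∀ n, n ≤ φ n) :
    upperBounds (Set.range (fun n => u (φ n))) = upperBounds (Set.range u) := by
  apply Set.Subset.antisymm
  · rintro b hb y ⟨n, rfl⟩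
    exact le_trans (hm (hφ n)) (hb ⟨n, rfl⟩)
  · rintro b hb y ⟨n, rfl⟩
    exact hb ⟨φ n, rfl⟩

theorem lub_mem_of_subseq {c : Set α}
    (hclosed : ∀ s ⊆ c, s.Nonempty → ∀ a : α, IsLUB s a → a ∈ c)
    {u : ℕ → α} (hm : Monotone u) {φ : ℕ → ℕ} (hφ : ∀ n, n ≤ φ n)
    (hmem : ∀ n, u (φ n) ∈ c) {a : α} (ha : IsLUB (Set.range u) a) : a ∈ c := by
  refine hclosed (Set.range fun n => u (φ n)) ?_ ⟨u (φ 0), ⟨0, rfl⟩⟩ a ?_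
  · rintro y ⟨n, rfl⟩; exact hmem n
  · constructor
    · rw [upperBounds_subseq hm hφ]; exact ha.1
    · intro b hb
      rw [upperBounds_subseq hm hφ] at hb
      exact ha.2 hb

variable (hreg : (#α).IsRegular) (hunc : ℵ₀ < #α) (hinit : ∀ a : α, #(Set.Iio a) < #α)

include hreg hunc hinit

theorem mk_Iic_lt (a : α) : #(Set.Iic a) < #α := by
  have h1 : (Set.Iic a : Set α) = insert a (Set.Iio a) := by
    ext x; simp [le_iff_lt_or_eq, or_comm]
  rw [h1]
  calc #(insert a (Set.Iio a) : Set α) ≤ #(Set.Iio a) + 1 := mk_insert_le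
    _ < #α := Cardinal.add_lt_of_lt hreg.aleph0_le (hinit a) (lt_trans one_lt_aleph0 hunc)

theorem small_bddAbove (s : Set α) (hs : #s < #α) : BddAbove s := by
  by_contra hbd
  have hcover : (⋃ b : s, Set.Iic (b : α)) = Set.univ := by
    ext x
    simp only [Set.mem_iUnion, Set.mem_univ, iff_true, Set.mem_Iic]
    by_contra hx
    push_neg at hx
    exact hbd ⟨x, fun y hy => ((hx ⟨y, hy⟩).le)⟩
  have h1 : #α ≤ Cardinal.sum fun b : s => #(Set.Iic (b : α)) := by
    calc #α = #(Set.univ : Set α) := mk_univ.symm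
      _ = #(⋃ b : s, Set.Iic (b : α)) := by rw [hcover]
      _ ≤ _ := mk_iUnion_le_sum_mk
  have h2 : Cardinal.sum (fun b : s => #(Set.Iic (b : α))) < #α :=
    Cardinal.sum_lt_of_isRegular hreg hs fun b => mk_Iic_lt hreg hunc hinit _
  exact absurd h1 (not_le.mpr h2)

theorem mk_of_not_bddAbove (s : Set α) (hs : ¬ BddAbove s) : #s = #α :=
  le_antisymm (mk_set_le s) (le_of_not_gt fun h => hs (small_bddAbove hreg hunc hinit s h))

theorem exists_gt_aux (a : α) : ∃ b, a < b := by
  by_contra h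
  push_neg at h
  have huniv : (Set.univ : Set α) = Set.Iic a := by
    ext x; simp [h x]
  have h2 : #(Set.Iic a) < #α := mk_Iic_lt hreg hunc hinit a
  rw [← huniv, mk_univ] at h2
  exact lt_irrefl _ h2

theorem nonempty_aux : Nonempty α := by
  rw [← Cardinal.mk_ne_zero_iff]
  exact ne_of_gt (lt_trans aleph0_pos hunc)

/-- Every countable sequence has a least upper bound. -/
theorem exists_isLUB_range_nat (u : ℕ → α) : ∃ a, IsLUB (Set.range u) a := by
  refine exists_isLUB_aux _ ⟨u 0, 0, rfl⟩ ?_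
  apply small_bddAbove hreg hunc hinit
  exact lt_of_le_of_lt (Set.countable_range u).le_aleph0 hunc

/-- Intersection of two clubs is a club. -/
theorem isClubIn_inter {c d : Set α} (hc : IsClubIn c) (hd : IsClubIn d) :
    IsClubIn (c ∩ d) := by
  constructor
  · intro s hs hne a ha
    exact ⟨hc.1 s (hs.trans Set.inter_subset_left) hne a ha,
           hd.1 s (hs.trans Set.inter_subset_right) hne a ha⟩
  · intro a₀
    -- build an alternating sequence
    have hstep : ∀ b : α, ∃ b' b'', b' ∈ c ∧ b < b' ∧ b' < b'' ∧ b'' ∈ d := by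
      intro b
      obtain ⟨b', hb'c, hbb'⟩ := hc.2 b
      obtain ⟨b'', hb''d, hb'b''⟩ := hd.2 b'
      exact ⟨b', b'', hb'c, hbb', hb'b'', hb''d⟩
    -- u (2n) ∈ c, u (2n+1) ∈ d, strictly increasing
    choose fc fd hfc hfclt hfdlt hfd using hstep
    let u : ℕ → α := fun n => Nat.rec (fc a₀) (fun k prev => if k % 2 = 0 then fd prev else fc prev) n
    have hu0 : u 0 = fc a₀ := rfl
    have husucc : ∀ n, u (n + 1) = if n % 2 = 0 then fd (u n) else fc (u n) := fun n => rfl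
    have hlt : ∀ n, u n < u (n + 1) := by
      intro n
      rw [husucc]
      by_cases h : n % 2 = 0
      · rw [if_pos h]; exact lt_trans (hfclt (u n)) (hfdlt (u n))
      · rw [if_neg h]; exact hfclt (u n)
    have hmono : StrictMono u := strictMono_nat_of_lt_succ hlt
    have hceven : ∀ n, u (2 * n) ∈ c := by
      intro n
      cases n with
      | zero => exact hfc a₀
      | succ m =>
          have : 2 * (m + 1) = (2 * m + 1) + 1 := by ring
          rw [this, husucc, if_neg (by omega)]
          exact hfc _
    have hdodd : ∀ n, u (2 * n + 1) ∈ d := by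
      intro n
      rw [husucc, if_pos (by omega)]
      exact hfd _
    obtain ⟨a, ha⟩ := exists_isLUB_range_nat hreg hunc hinit u
    refine ⟨a, ⟨?_, ?_⟩, ?_⟩
    · exact lub_mem_of_subseq hc.1 hmono.monotone (φ := fun n => 2 * n) (fun n => by show n ≤ 2*n; omega) hceven ha
    · exact lub_mem_of_subseq hd.1 hmono.monotone (φ := fun n => 2 * n + 1) (fun n => by show n ≤ 2*n+1; omega) hdodd ha
    · exact lt_of_lt_of_le (hfclt a₀) (ha.1 ⟨0, rfl⟩)

theorem isStatIn_inter_club {x c : Set α} (hx : IsStatIn x) (hc : IsClubIn c) :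
    IsStatIn (x ∩ c) := by
  intro e he
  obtain ⟨k, hk, hk2⟩ := hx (c ∩ e) (isClubIn_inter hreg hunc hinit hc he)
  exact ⟨k, ⟨hk, hk2.1⟩, hk2.2⟩

theorem isStatIn_mono {x y : Set α} (hxy : x ⊆ y) (hx : IsStatIn x) : IsStatIn y :=
  fun c hc => ((hx c hc).mono (Set.inter_subset_inter_left _ hxy))

/-- The set of closure points of `h` is a club. -/
theorem isClubIn_closurePoints (h : α → α) :
    IsClubIn {k : α | ∀ i, i < k → h i < k} := by
  constructor
  · intro s hs hne a ha i hia
    have : ∃ e ∈ s, i < e := by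
      by_contra hcon
      push_neg at hcon
      exact absurd (ha.2 hcon) (not_le.mpr hia)
    obtain ⟨e, hes, hie⟩ := this
    exact lt_of_lt_of_le (hs hes i hie) (ha.1 hes)
  · intro a₀
    have hstep : ∀ b : α, ∃ b', b < b' ∧ ∀ i, i ≤ b → h i < b' := by
      intro b
      have hsmall : #(insert b (h '' Set.Iic b) : Set α) < #α := by
        refine lt_of_le_of_lt mk_insert_le ?_
        refine Cardinal.add_lt_of_lt hreg.aleph0_le ?_ (lt_trans one_lt_aleph0 hunc)
        exact lt_of_le_of_lt mk_image_le (mk_Iic_lt hreg hunc hinit b)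
      obtain ⟨m, hm⟩ := small_bddAbove hreg hunc hinit _ hsmall
      obtain ⟨b', hb'⟩ := exists_gt_aux hreg hunc hinit m
      refine ⟨b', ?_, ?_⟩
      · exact lt_of_le_of_lt (hm (Set.mem_insert _ _)) hb'
      · intro i hi
        exact lt_of_le_of_lt (hm (Set.mem_insert_of_mem _ ⟨i, hi, rfl⟩)) hb'
    choose f hflt hf using hstep
    let u : ℕ → α := fun n => Nat.rec (f a₀) (fun _ prev => f prev) n
    have husucc : ∀ n, u (n + 1) = f (u n) := fun n => rfl
    have hlt : ∀ n, u n < u (n + 1) := fun n => hflt (u n)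
    have hmono : StrictMono u := strictMono_nat_of_lt_succ hlt
    obtain ⟨a, ha⟩ := exists_isLUB_range_nat hreg hunc hinit u
    refine ⟨a, ?_, lt_of_lt_of_le (hflt a₀) (ha.1 ⟨0, rfl⟩)⟩
    intro i hia
    have : ∃ n, i < u n := by
      by_contra hcon
      push_neg at hcon
      exact absurd (ha.2 (by rintro y ⟨n, rfl⟩; exact hcon n)) (not_le.mpr hia)
    obtain ⟨n, hn⟩ := this
    calc h i < u (n + 1) := hf (u n) i hn.le
      _ ≤ a := ha.1 ⟨n + 1, rfl⟩

end Basics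

section Lex

variable {α : Type*} [LinearOrder α] [WellFoundedLT α]

/-- `f` and `g` agree (as binary sequences) below `a`. -/
def BAgree (a : α) (f g : α → Bool) : Prop := ∀ q, q < a → f q = g q

/-- `f` is lexicographically strictly less than `g` below `a`. -/
def BLt (a : α) (f g : α → Bool) : Prop :=
  ∃ p, p < a ∧ (∀ q, q < p → f q = g q) ∧ f p = false ∧ g p = true

/-- `f` is lexicographically at most `g` below `a`. -/
def BLe (a : α) (f g : α → Bool) : Prop := BAgree a f g ∨ BLt a f g

theorem bagree_symm {a : α} {f g : α → Bool} (h : BAgree a f g) : BAgree a g f :=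
  fun q hq => (h q hq).symm

theorem bagree_trans {a : α} {f g h : α → Bool} (h1 : BAgree a f g) (h2 : BAgree a g h) :
    BAgree a f h := fun q hq => (h1 q hq).trans (h2 q hq)

theorem bagree_mono {a b : α} {f g : α → Bool} (hab : a ≤ b) (h : BAgree b f g) :
    BAgree a f g := fun q hq => h q (lt_of_lt_of_le hq hab)

theorem blt_total {a : α} {f g : α → Bool} (h : ¬ BAgree a f g) :
    BLt a f g ∨ BLt a g f := by
  have wf : WellFounded ((· < ·) : α → α → Prop) := IsWellFounded.wf
  have hne : {p : α | p < a ∧ f p ≠ g p}.Nonempty := by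
    rw [Set.nonempty_iff_ne_empty]
    intro hcon
    apply h
    intro q hq
    by_contra hfg
    have : q ∈ {p : α | p < a ∧ f p ≠ g p} := ⟨hq, hfg⟩
    rw [hcon] at this
    exact this
  set p := wf.min _ hne with hp
  obtain ⟨hpa, hpne⟩ := wf.min_mem _ hne
  have hagree : ∀ q, q < p → f q = g q := by
    intro q hq
    by_contra hfg
    exact wf.not_lt_min {p : α | p < a ∧ f p ≠ g p} ⟨lt_trans hq hpa, hfg⟩ hq
  cases hf : f p with
  | false =>
    left
    refine ⟨p, hpa, hagree, hf, ?_⟩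
    cases hgp : g p with
    | false => exact absurd (hf.trans hgp.symm) hpne
    | true => rfl
  | true =>
    right
    refine ⟨p, hpa, fun q hq => (hagree q hq).symm, ?_, hf⟩
    cases hgp : g p with
    | false => rfl
    | true => exact absurd (hf.trans hgp.symm) hpne

theorem blt_witness_eq {a : α} {f g : α → Bool} {p q : α}
    (hp : p < a ∧ (∀ r, r < p → f r = g r) ∧ f p = false ∧ g p = true)
    (hq : q < a ∧ (∀ r, r < q → f r = g r) ∧ f q = false ∧ g q = true) : p = q := by
  rcases lt_trichotomy p q with h | h | h
  · have := hq.2.1 p h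
    rw [hp.2.2.1, hp.2.2.2] at this
    exact absurd this (by simp)
  · exact h
  · have := hp.2.1 q h
    rw [hq.2.2.1, hq.2.2.2] at this
    exact absurd this (by simp)

theorem blt_asymm {a : α} {f g : α → Bool} (h1 : BLt a f g) (h2 : BLt a g f) : False := by
  obtain ⟨p, hpa, hpag, hpf, hpg⟩ := h1
  obtain ⟨q, hqa, hqag, hqg, hqf⟩ := h2
  rcases lt_trichotomy p q with h | h | h
  · have := hqag p h
    rw [hpf, hpg] at this
    simp at this
  · rw [h] at hpf; rw [hpf] at hqf; simp at hqf
  · have := hpag q h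
    rw [hqg, hqf] at this
    simp at this

theorem blt_irrefl {a : α} {f : α → Bool} (h : BLt a f f) : False := by
  obtain ⟨p, _, _, h1, h2⟩ := h
  rw [h1] at h2; simp at h2

theorem bagree_blt {a : α} {f g h : α → Bool} (h1 : BAgree a f g) (h2 : BLt a g h) :
    BLt a f h := by
  obtain ⟨p, hpa, hag, hg, hh⟩ := h2
  exact ⟨p, hpa, fun q hq => (h1 q (lt_trans hq hpa)).trans (hag q hq),
    (h1 p hpa).trans hg, hh⟩

theorem blt_bagree {a : α} {f g h : α → Bool} (h1 : BLt a f g) (h2 : BAgree a g h) :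
    BLt a f h := by
  obtain ⟨p, hpa, hag, hf, hg⟩ := h1
  exact ⟨p, hpa, fun q hq => (hag q hq).trans (h2 q (lt_trans hq hpa)), hf,
    by rw [← h2 p hpa]; exact hg⟩

theorem blt_trans {a : α} {f g h : α → Bool} (h1 : BLt a f g) (h2 : BLt a g h) :
    BLt a f h := by
  obtain ⟨p, hpa, hpag, hpf, hpg⟩ := h1
  obtain ⟨q, hqa, hqag, hqg, hqh⟩ := h2
  rcases lt_trichotomy p q with hlt | heq | hgt
  · refine ⟨p, hpa, fun r hr => (hpag r hr).trans (hqag r (lt_trans hr hlt)), hpf, ?_⟩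
    rw [← hqag p hlt]; exact hpg
  · exact ⟨p, hpa, fun r hr => (hpag r hr).trans (hqag r (heq ▸ hr)), hpf, heq ▸ hqh⟩
  · refine ⟨q, hqa, fun r hr => (hpag r (lt_trans hr hgt)).trans (hqag r hr), ?_, hqh⟩
    rw [hpag q hgt]; exact hqg

theorem ble_trans {a : α} {f g h : α → Bool} (h1 : BLe a f g) (h2 : BLe a g h) :
    BLe a f h := by
  rcases h1 with h1 | h1 <;> rcases h2 with h2 | h2
  · exact Or.inl (bagree_trans h1 h2)
  · exact Or.inr (bagree_blt h1 h2)
  · exact Or.inr (blt_bagree h1 h2)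
  · exact Or.inr (blt_trans h1 h2)

theorem ble_antisymm {a : α} {f g : α → Bool} (h1 : BLe a f g) (h2 : BLe a g f) :
    BAgree a f g := by
  rcases h1 with h1 | h1
  · exact h1
  rcases h2 with h2 | h2
  · exact bagree_symm h2
  · exact absurd h1 (fun h1' => blt_asymm h1' h2)

theorem ble_mono {a b : α} {f g : α → Bool} (hab : a ≤ b) (h : BLe b f g) : BLe a f g := by
  rcases h with h | h
  · exact Or.inl (bagree_mono hab h)
  obtain ⟨p, hpb, hag, hf, hg⟩ := h
  rcases lt_or_ge p a with hpa | hap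
  · exact Or.inr ⟨p, hpa, hag, hf, hg⟩
  · exact Or.inl (fun q hq => hag q (lt_of_lt_of_le hq hap))

theorem blt_not {a : α} {f g : α → Bool} (h : BLt a f g) :
    BLt a (fun p => !(g p)) (fun p => !(f p)) := by
  obtain ⟨p, hpa, hag, hf, hg⟩ := h
  exact ⟨p, hpa, fun q hq => by simp only [hag q hq], by simp only [hg]; rfl,
    by simp only [hf]; rfl⟩

theorem ble_not {a : α} {f g : α → Bool} (h : BLe a f g) :
    BLe a (fun p => !(g p)) (fun p => !(f p)) := by
  rcases h with h | h
  · exact Or.inl (fun q hq => by simp only [h q hq])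
  · exact Or.inr (blt_not h)

end Lex

section Inaccessible

attribute [local instance] Classical.propDecidable

variable {α : Type*} [LinearOrder α] [WellFoundedLT α]

theorem exists_gt_of_not_bddAbove {s : Set α} (h : ¬ BddAbove s) (b : α) :
    ∃ j ∈ s, b < j := by
  by_contra hcon
  push_neg at hcon
  exact h ⟨b, fun j hj => hcon j hj⟩

/-- Binary sequences supported below `a`. -/
def Fset (a : α) : Set (α → Bool) := {f | ∀ p, ¬ p < a → f p = false}

theorem mk_Fset_le (a : α) : #(Fset a) ≤ #(Set.Iio a → Bool) := by
  refine Cardinal.mk_le_of_injective (f := fun f (p : Set.Iio a) => (f : α → Bool) p.1) ?_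
  rintro ⟨f, hf⟩ ⟨g, hg⟩ h
  refine Subtype.ext (funext fun p => ?_)
  by_cases hp : p < a
  · exact congrFun h ⟨p, hp⟩
  · show f p = g p
    rw [hf p hp, hg p hp]

variable (hreg : (#α).IsRegular) (hunc : ℵ₀ < #α) (hinit : ∀ a : α, #(Set.Iio a) < #α)

include hreg hunc hinit

/-- Ineffability implies inaccessibility: `2 ^ |I_a| < κ` for each initial segment. -/
theorem pow_lt_of_ineffable (hin : Ineffable α) :
    ∀ a : α, #(Set.Iio a → Bool) < #α := by
  intro a
  apply WellFoundedLT.induction a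
  intro a IH
  by_contra hle
  push_neg at hle
  obtain ⟨g⟩ : Nonempty (α ↪ (Set.Iio a → Bool)) := Cardinal.le_def _ _ |>.mp hle
  set g' : α → α → Bool := fun i p => if hp : p < a then g i ⟨p, hp⟩ else false with hg'
  have hg'agree : ∀ i j, BAgree a (g' i) (g' j) → i = j := by
    intro i j h
    apply g.injective
    funext p
    have h1 := h p.1 p.2
    have e : ∀ k : α, g' k p.1 = g k p := by
      intro k
      show (if hp : (p : α) < a then g k ⟨(p : α), hp⟩ else false) = g k p
      rw [dif_pos (show (p : α) < a from p.2)]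
    rw [e i, e j] at h1
    exact h1
  set col : α → α → Bool := fun i j => if BLe a (g' i) (g' j) then true else false with hcol
  obtain ⟨x, hxstat, cb, hhom⟩ := hin col
  have hxub : ¬ BddAbove x := hxstat.not_bddAbove (exists_gt_aux hreg hunc hinit)
  set u : α → α → Bool :=
    fun i p => if p < a then (if cb then g' i p else !(g' i p)) else false with hu
  have huag : ∀ i, cb = true → BAgree a (u i) (g' i) := by
    intro i hcb q hq
    show (if q < a then (if cb = true then g' i q else !(g' i q)) else false) = g' i q
    rw [if_pos hq, if_pos hcb]
  have huag' : ∀ i, cb = false → BAgree a (u i) (fun p => !(g' i p)) := by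
    intro i hcb q hq
    show (if q < a then (if cb = true then g' i q else !(g' i q)) else false) = !(g' i q)
    rw [if_pos hq, if_neg (by rw [hcb]; exact Bool.false_ne_true)]
  have hnotag : ∀ i j : α, i ≠ j → ¬ BAgree a (u i) (u j) := by
    intro i j hne hag
    apply hne
    apply hg'agree
    intro q hq
    have := hag q hq
    by_cases hcb : cb = true
    · rw [(huag i hcb q hq), (huag j hcb q hq)] at this
      exact this
    · rw [Bool.not_eq_true] at hcb
      rw [(huag' i hcb q hq), (huag' j hcb q hq)] at this
      simpa using this
  have hchain : ∀ i ∈ x, ∀ j ∈ x, i < j → BLt a (u i) (u j) := by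
    intro i hi j hj hij
    have hcolval := hhom i hi j hj hij
    have hle : BLe a (u i) (u j) := by
      by_cases hcb : cb = true
      · rw [hcb, hcol] at hcolval
        have hble : BLe a (g' i) (g' j) := by
          by_contra hc
          simp only [if_neg hc] at hcolval
          simp at hcolval
        exact ble_trans (Or.inl (huag i hcb))
          (ble_trans hble (Or.inl (bagree_symm (huag j hcb))))
      · rw [Bool.not_eq_true] at hcb
        rw [hcb, hcol] at hcolval
        have hnble : ¬ BLe a (g' i) (g' j) := by
          intro hc
          simp only [if_pos hc] at hcolval
          simp at hcolval
        have hnag : ¬ BAgree a (g' i) (g' j) := fun hc => hnble (Or.inl hc)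
        have hblt : BLt a (g' j) (g' i) := by
          rcases blt_total hnag with h | h
          · exact absurd (Or.inr h) hnble
          · exact h
        have := blt_not hblt
        exact ble_trans (Or.inl (huag' i hcb))
          (ble_trans (Or.inr this) (Or.inl (bagree_symm (huag' j hcb))))
    rcases hle with hle | hle
    · exact absurd hle (hnotag i j (ne_of_lt hij))
    · exact hle
  -- successor function on x
  have wf : WellFounded ((· < ·) : α → α → Prop) := IsWellFounded.wf
  have hnxt : ∀ i : α, {j | j ∈ x ∧ i < j}.Nonempty := by
    intro i
    obtain ⟨j, hj, hij⟩ := exists_gt_of_not_bddAbove hxub i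
    exact ⟨j, hj, hij⟩
  set nxt : α → α := fun i => wf.min _ (hnxt i) with hnxtdef
  have hnxtx : ∀ i, nxt i ∈ x := fun i => (wf.min_mem _ (hnxt i)).1
  have hnxtgt : ∀ i, i < nxt i := fun i => (wf.min_mem _ (hnxt i)).2
  have hnxtle : ∀ i, ∀ j ∈ x, i < j → nxt i ≤ j := by
    intro i j hj hij
    by_contra hc
    exact wf.not_lt_min {j | j ∈ x ∧ i < j} ⟨hj, hij⟩ (not_le.mp hc)
  have hblt : ∀ i : x, BLt a (u i) (u (nxt i)) :=
    fun i => hchain i i.2 (nxt i) (hnxtx i) (hnxtgt i)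
  choose pt hpta hptag hptf hptt using hblt
  -- the injection
  set S : Set ((α → Bool) × α) := {tp | tp.2 < a ∧ ∀ q, ¬ q < tp.2 → tp.1 q = false} with hS
  set Φ : x → (α → Bool) × α :=
    fun i => (fun q => if q < pt i then u i q else false, pt i) with hΦ
  have hkey : ∀ i j : x, (i : α) < j → Φ i = Φ j → False := by
    intro i j hij h
    have hpeq : pt i = pt j := congrArg Prod.snd h
    have htr : ∀ q, q < pt i → u i q = u j q := by
      intro q hq
      have := congrFun (congrArg Prod.fst h) q
      simp only [hΦ, if_pos hq, if_pos (hpeq ▸ hq)] at this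
      exact this
    have hujf : u j (pt i) = false := by rw [hpeq]; exact hptf j
    have hnle : nxt i ≤ j := hnxtle i j j.2 hij
    rcases eq_or_lt_of_le hnle with heq | hlt
    · have h5 := hptt i
      rw [heq] at h5
      rw [h5] at hujf
      simp at hujf
    · have hc := hchain (nxt i) (hnxtx i) j j.2 hlt
      have : BLt a (u j) (u (nxt i)) := by
        refine ⟨pt i, hpta i, ?_, hujf, hptt i⟩
        intro r hr
        exact (htr r hr).symm.trans (hptag i r hr)
      exact blt_asymm hc this
  have hΦinj : Function.Injective Φ := by
    intro i j h
    rcases lt_trichotomy (i : α) (j : α) with hlt | heq | hgt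
    · exact absurd h (fun h => hkey i j hlt h)
    · exact Subtype.ext heq
    · exact absurd h.symm (fun h => hkey j i hgt h)
  have hΦS : ∀ i : x, Φ i ∈ S := by
    intro i
    refine ⟨hpta i, ?_⟩
    intro q hq
    exact if_neg hq
  have hmkx : #x ≤ #S :=
    Cardinal.mk_le_of_injective (f := fun i : x => (⟨Φ i, hΦS i⟩ : S))
      (fun i j h => hΦinj (congrArg Subtype.val h))
  have hmkS : #S < #α := by
    have hsub : S ⊆ ⋃ p : Set.Iio a, (fun t => (t, (p : α))) '' (Fset (p : α)) := by
      rintro ⟨t, b⟩ ⟨hb, ht⟩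
      exact Set.mem_iUnion.mpr ⟨⟨b, hb⟩, ⟨t, ht, rfl⟩⟩
    refine lt_of_le_of_lt (Cardinal.mk_le_mk_of_subset hsub) ?_
    refine lt_of_le_of_lt Cardinal.mk_iUnion_le_sum_mk ?_
    refine Cardinal.sum_lt_of_isRegular hreg (hinit a) ?_
    intro p
    refine lt_of_le_of_lt Cardinal.mk_image_le ?_
    exact lt_of_le_of_lt (mk_Fset_le (p : α)) (IH p p.2)
  have hmkxα : #x = #α := mk_of_not_bddAbove hreg hunc hinit x hxub
  rw [hmkxα] at hmkx
  exact absurd hmkx (not_le.mpr hmkS)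

/-- Stabilization of a lex-monotone assignment on an unbounded set. -/
theorem stabilize {x : Set α} (hxub : ¬ BddAbove x) (a : α)
    (hFa : #(Fset (a := a)) < #α) (v : α → α → Bool)
    (hmono : ∀ β ∈ x, ∀ γ ∈ x, a < β → β < γ → BLe a (v β) (v γ)) :
    ∃ b, ∃ E : α → Bool, ∀ β ∈ x, a < β → b < β → BAgree a (v β) E := by
  set T : α → α → Bool := fun β q => if q < a then v β q else false with hT
  set fib : (α → Bool) → Set α := fun w => {β | β ∈ x ∧ a < β ∧ T β = w} with hfib
  have hTF : ∀ β, T β ∈ Fset a := by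
    intro β q hq
    simp only [hT, if_neg hq]
  have hex : ∃ w : Fset (a := a), ¬ BddAbove (fib w) := by
    by_contra hcon
    push_neg at hcon
    choose bd hbd using hcon
    have hbdd : BddAbove (Set.range bd) := by
      apply small_bddAbove hreg hunc hinit
      exact lt_of_le_of_lt Cardinal.mk_range_le hFa
    obtain ⟨M, hM⟩ := hbdd
    apply hxub
    refine ⟨max a M, fun β hβ => ?_⟩
    by_cases haβ : a < β
    · have : β ∈ fib (T β) := ⟨hβ, haβ, rfl⟩
      exact le_trans (le_trans (hbd ⟨T β, hTF β⟩ this) (hM ⟨_, rfl⟩)) (le_max_right _ _)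
    · exact le_trans (not_lt.mp haβ) (le_max_left _ _)
  obtain ⟨w, hw⟩ := hex
  have _ : Nonempty α := nonempty_aux hreg hunc hinit
  have hfibne : (fib w).Nonempty := by
    by_contra hcon
    rw [Set.not_nonempty_iff_eq_empty] at hcon
    exact hw (hcon ▸ bddAbove_empty)
  obtain ⟨γ₀, hγ₀x, haγ₀, hTγ₀⟩ := hfibne
  refine ⟨γ₀, v γ₀, ?_⟩
  intro β hβx haβ hγβ
  obtain ⟨δ, ⟨hδx, haδ, hTδ⟩, hβδ⟩ := exists_gt_of_not_bddAbove hw β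
  have h1 : BLe a (v γ₀) (v β) := hmono γ₀ hγ₀x β hβx haγ₀ hγβ
  have h2 : BLe a (v β) (v δ) := hmono β hβx δ hδx haβ hβδ
  have h3 : BAgree a (v δ) (v γ₀) := by
    intro q hq
    have h4 : T δ q = T γ₀ q := by rw [hTδ, hTγ₀]
    have e : ∀ k, T k q = v k q := by
      intro k
      show (if q < a then v k q else false) = v k q
      rw [if_pos hq]
    rw [e δ, e γ₀] at h4
    exact h4
  exact ble_antisymm (ble_trans h2 (Or.inl h3)) h1

end Inaccessible

section Main

attribute [local instance] Classical.propDecidable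

variable {α : Type*} [LinearOrder α] [WellFoundedLT α]
variable (hreg : (#α).IsRegular) (hunc : ℵ₀ < #α) (hinit : ∀ a : α, #(Set.Iio a) < #α)

include hreg hunc hinit

theorem forward_dir (hnfp : NormalStarFilterProperty α) : Ineffable α := by
  intro f
  set xs : α → Set α := fun i => {j | f i j = true} with hxs
  obtain ⟨F, hFu, hFn, hFm⟩ := hnfp (Set.range xs) Cardinal.mk_range_le
  set g : α → Set α := fun i => if xs i ∈ F then xs i else (xs i)ᶜ with hg
  have hgF : ∀ i, g i ∈ F := by
    intro i
    by_cases h : xs i ∈ F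
    · rw [hg]; simpa [if_pos h] using h
    · rw [hg]
      simp only [if_neg h]
      rcases hFm (xs i) ⟨i, rfl⟩ with h' | h'
      · exact absurd h' h
      · exact h'
  have hS₀ := hFn g hgF
  set S₀ := {k : α | ∀ i < k, k ∈ g i} with hS₀def
  set P := {i : α | i ∈ S₀ ∧ xs i ∈ F} with hP
  set Q := {i : α | i ∈ S₀ ∧ xs i ∉ F} with hQ
  have hPQ : IsStatIn P ∨ IsStatIn Q := by
    by_contra hcon
    push_neg at hcon
    obtain ⟨hPn, hQn⟩ := hcon
    rw [IsStatIn] at hPn hQn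
    push_neg at hPn hQn
    obtain ⟨c₁, hc₁, hP1⟩ := hPn
    obtain ⟨c₂, hc₂, hQ1⟩ := hQn
    obtain ⟨k, hkS₀, hk12⟩ := hS₀ (c₁ ∩ c₂) (isClubIn_inter hreg hunc hinit hc₁ hc₂)
    by_cases hk : xs k ∈ F
    · have hmem : k ∈ P ∩ c₁ := ⟨⟨hkS₀, hk⟩, hk12.1⟩
      rw [hP1] at hmem
      exact hmem
    · have hmem : k ∈ Q ∩ c₂ := ⟨⟨hkS₀, hk⟩, hk12.2⟩
      rw [hQ1] at hmem
      exact hmem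
  rcases hPQ with hstat | hstat
  · refine ⟨P, hstat, true, ?_⟩
    intro i hi j hj hij
    have hjg : j ∈ g i := hj.1 i hij
    rw [hg] at hjg
    simp only [if_pos hi.2] at hjg
    exact hjg
  · refine ⟨Q, hstat, false, ?_⟩
    intro i hi j hj hij
    have hjg : j ∈ g i := hj.1 i hij
    rw [hg] at hjg
    simp only [if_neg hi.2] at hjg
    have : ¬ f i j = true := hjg
    simpa using this

theorem backward_dir (hin : Ineffable α) : NormalStarFilterProperty α := by
  have hane : Nonempty α := nonempty_aux hreg hunc hinit
  have hgt : ∀ a : α, ∃ b, a < b := exists_gt_aux hreg hunc hinit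
  intro X hX
  -- enumerate X
  obtain ⟨e⟩ : Nonempty (X ↪ α) := Cardinal.le_def _ _ |>.mp hX
  set A : α → Set α := fun i =>
    if h : ∃ y : X, e y = i then ((Classical.choose h : X) : Set α) else ∅ with hA
  have hAsurj : ∀ y ∈ X, ∃ i, A i = y := by
    intro y hy
    refine ⟨e ⟨y, hy⟩, ?_⟩
    have hex : ∃ z : X, e z = e ⟨y, hy⟩ := ⟨⟨y, hy⟩, rfl⟩
    rw [hA]
    simp only [dif_pos hex]
    have hspec := Classical.choose_spec hex
    have := e.injective hspec
    rw [this]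
  -- the list coloring
  set v : α → α → Bool := fun j i => if i < j ∧ j ∈ A i then true else false with hv
  set col : α → α → Bool := fun i j => if BLe i (v i) (v j) then true else false with hcol
  obtain ⟨x, hxstat, cb, hhom⟩ := hin col
  have hxub : ¬ BddAbove x := hxstat.not_bddAbove hgt
  have hFa : ∀ a : α, #(Fset (α := α) a) < #α :=
    fun a => lt_of_le_of_lt (mk_Fset_le a)
      (pow_lt_of_ineffable hreg hunc hinit hin a)
  -- the key stabilization
  have key : ∀ a : α, ∃ b, ∃ E : α → Bool, ∀ β ∈ x, a < β → b < β → BAgree a (v β) E := by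
    intro a
    cases hcb : cb with
    | true =>
      apply stabilize hreg hunc hinit hxub a (hFa a) v
      intro β hβ γ hγ haβ hβγ
      have hc := hhom β hβ γ hγ hβγ
      rw [hcb, hcol] at hc
      have hble : BLe β (v β) (v γ) := by
        by_contra hcon
        simp only [if_neg hcon] at hc
        simp at hc
      exact ble_mono (le_of_lt haβ) hble
    | false =>
      have hmono : ∀ β ∈ x, ∀ γ ∈ x, a < β → β < γ →
          BLe a (fun p => !(v β p)) (fun p => !(v γ p)) := by
        intro β hβ γ hγ haβ hβγ
        have hc := hhom β hβ γ hγ hβγ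
        rw [hcb, hcol] at hc
        have hnble : ¬ BLe β (v β) (v γ) := by
          intro hcon
          simp only [if_pos hcon] at hc
          simp at hc
        have hnag : ¬ BAgree β (v β) (v γ) := fun h => hnble (Or.inl h)
        have hblt : BLt β (v γ) (v β) := by
          rcases blt_total hnag with h | h
          · exact absurd (Or.inr h) hnble
          · exact h
        exact ble_not (ble_mono (le_of_lt haβ) (Or.inr hblt))
      obtain ⟨b, E, hE⟩ := stabilize hreg hunc hinit hxub a (hFa a)
        (fun β p => !(v β p)) hmono
      refine ⟨b, fun p => !(E p), ?_⟩
      intro β hβ h1 h2 q hq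
      have h0 : Bool.not (v β q) = E q := hE β hβ h1 h2 q hq
      show v β q = Bool.not (E q)
      rw [← h0, Bool.not_not]
  choose bE EE hkey using key
  set na : α → α := fun i => Classical.choose (hgt i) with hna
  have hnagt : ∀ i, i < na i := fun i => Classical.choose_spec (hgt i)
  set H : α → α := fun i => max (bE (na i)) (na i) with hH
  set c : Set α := {k : α | ∀ i, i < k → H i < k} with hc
  have hcclub : IsClubIn c := isClubIn_closurePoints hreg hunc hinit H
  have hxc : IsStatIn (x ∩ c) := isStatIn_inter_club hreg hunc hinit hxstat hcclub
  set B : Set α := {i : α | EE (na i) i = true} with hB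
  -- main coherence property
  have main : ∀ i : α, ∀ β ∈ x ∩ c, i < β → (β ∈ A i ↔ i ∈ B) := by
    intro i β hβ hiβ
    have hHi : H i < β := hβ.2 i hiβ
    have hna1 : na i < β := lt_of_le_of_lt (le_max_right _ _) hHi
    have hbE1 : bE (na i) < β := lt_of_le_of_lt (le_max_left _ _) hHi
    have hag := hkey (na i) β hβ.1 hna1 hbE1
    have hvi := hag i (hnagt i)
    have hviA : v β i = true ↔ β ∈ A i := by
      simp only [hv]
      by_cases h : i < β ∧ β ∈ A i
      · rw [if_pos h]
        exact ⟨fun _ => h.2, fun _ => rfl⟩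
      · simp only [if_neg h]
        constructor
        · intro hfalse; exact absurd hfalse (by simp)
        · intro hmem; exact absurd ⟨hiβ, hmem⟩ h
    have hBi : i ∈ B ↔ EE (na i) i = true := Iff.rfl
    rw [← hviA, hBi, hvi]
  -- the filter
  set Fil : Set (Set α) := {Y : Set α | BddAbove ((x ∩ c) \ Y)} with hFil
  have hxcub : ¬ BddAbove (x ∩ c) := hxc.not_bddAbove hgt
  refine ⟨Fil, ⟨?_, ?_, ?_, ?_, ?_⟩, ?_, ?_⟩
  · -- univ ∈ Fil
    show BddAbove ((x ∩ c) \ Set.univ)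
    rw [Set.diff_univ]
    exact bddAbove_empty
  · -- upward closed
    intro Y hY Z hYZ
    exact BddAbove.mono (Set.diff_subset_diff_right hYZ) hY
  · -- intersections
    intro Y hY Z hZ
    show BddAbove ((x ∩ c) \ (Y ∩ Z))
    rw [Set.diff_inter]
    exact BddAbove.union hY hZ
  · -- cardinality
    intro Y hY
    obtain ⟨m, hm⟩ := hY
    have hsub : (x ∩ c) ∩ Set.Ioi m ⊆ Y := by
      rintro β ⟨hβ1, hβ2⟩
      by_contra hβY
      exact absurd (hm ⟨hβ1, hβY⟩) (not_le.mpr hβ2)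
    have hstat2 : IsStatIn ((x ∩ c) ∩ Set.Ioi m) :=
      isStatIn_inter_club hreg hunc hinit hxc (isClubIn_Ioi hgt m)
    have hub2 : ¬ BddAbove ((x ∩ c) ∩ Set.Ioi m) := hstat2.not_bddAbove hgt
    refine le_antisymm (mk_set_le _) ?_
    calc #α = #((x ∩ c) ∩ Set.Ioi m : Set α) :=
          (mk_of_not_bddAbove hreg hunc hinit _ hub2).symm
      _ ≤ #Y := Cardinal.mk_le_mk_of_subset hsub
  · -- co-bounded sets
    intro Y hYc
    exact BddAbove.mono (fun β hβ => hβ.2) hYc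
  · -- normal*
    intro f hf
    have hbd : ∀ i, ∃ m, m ∈ upperBounds ((x ∩ c) \ f i) := fun i => hf i
    choose bb hbb using hbd
    set c' : Set α := {k : α | ∀ i, i < k → bb i < k} with hc'
    have hc'club : IsClubIn c' := isClubIn_closurePoints hreg hunc hinit bb
    have hsub : (x ∩ c) ∩ c' ⊆ {k : α | ∀ i < k, k ∈ f i} := by
      rintro k ⟨hk1, hk2⟩ i hik
      by_contra hkf
      exact absurd (hbb i ⟨hk1, hkf⟩) (not_le.mpr (hk2 i hik))
    exact isStatIn_mono hreg hunc hinit hsub (isStatIn_inter_club hreg hunc hinit hxc hc'club)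
  · -- measures
    intro y hy
    obtain ⟨i, hi⟩ := hAsurj y hy
    by_cases hiB : i ∈ B
    · left
      show BddAbove ((x ∩ c) \ y)
      refine ⟨i, ?_⟩
      rintro β ⟨hβ1, hβ2⟩
      by_contra hc2
      push_neg at hc2
      exact hβ2 (hi ▸ (main i β hβ1 hc2).mpr hiB)
    · right
      show BddAbove ((x ∩ c) \ yᶜ)
      refine ⟨i, ?_⟩
      rintro β ⟨hβ1, hβ2⟩
      by_contra hc2
      push_neg at hc2
      rw [Set.notMem_compl_iff] at hβ2
      exact hiB ((main i β hβ1 hc2).mp (hi ▸ hβ2 : β ∈ A i))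

end Main


/-- For a regular uncountable cardinal `κ`, `κ` has the normal* filter property if and only
if `κ` is ineffable. Here `κ` is represented as a well-ordered type `α` of regular
uncountable cardinality all of whose proper initial segments are of size `< #α`. -/
theorem normalStarFilterProperty_iff_ineffable {α : Type*} [LinearOrder α] [WellFoundedLT α]
    (hreg : (#α).IsRegular) (hunc : ℵ₀ < #α)
    (hinit : ∀ a : α, #(Set.Iio a) < #α) :
    NormalStarFilterProperty α ↔ Ineffable α :=
  ⟨forward_dir hreg hunc hinit, backward_dir hreg hunc hinit⟩
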